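/- arXiv:1809.07344 — 2 statements merged into one kernel-verified Lean document; each statement's English description precedes it below -/
import Mathlib

section
/- Let I ⊆ ℂ[x₀,…,xₙ] be a homogeneous ideal generated by homogeneous polynomials of degree at most d, and let v be any function from the nonzero elements of ℂ[x₁,…,xₙ] to ℤⁿ. Let a, b be coprime positive integers with b > d·a, and set q = b/a. Define U_{a,b} := {(α, u) ∈ ℝⁿ × ℝ : u ∈ ℤ_{≥0}, α ∈ v((((I^a)_b)|_{x₀=1})^u \ {0})} and U_I := {(α, s, t) ∈ ℝⁿ × ℝ² : s, t ∈ ℤ_{≥0}, α ∈ v(((I^t)_s)|_{x₀=1} \ {0})}, and let H_q := {(α, s, t) ∈ ℝⁿ × ℝ² : s = q·t}. Then the map (α, u) ↦ (α, b·u, a·u) is a bijection from U_{a,b} onto U_I ∩ H_q. -/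
open MvPolynomial Pointwise

/-- The degree-`s` homogeneous component of an ideal in `ℂ[x₀,…,xₙ]`,
as a `ℂ`-subspace of the polynomial ring. -/
noncomputable def idealComponent {n : ℕ} (I : Ideal (MvPolynomial (Fin (n + 1)) ℂ)) (s : ℕ) :
    Submodule ℂ (MvPolynomial (Fin (n + 1)) ℂ) :=
  I.restrictScalars ℂ ⊓ homogeneousSubmodule (Fin (n + 1)) ℂ s

/-- Setting `x₀ = 1`: the dehomogenization map `ℂ[x₀,…,xₙ] → ℂ[x₁,…,xₙ]`. -/
noncomputable def dehom (n : ℕ) : MvPolynomial (Fin (n + 1)) ℂ →ₐ[ℂ] MvPolynomial (Fin n) ℂ :=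
  aeval (Fin.cases 1 X)


lemma finsupp_degree_add {σ : Type*} (d e : σ →₀ ℕ) :
    (d + e).degree = d.degree + e.degree := by
  simp [Finsupp.degree_eq_weight_one, map_add]

lemma finsupp_degree_single {σ : Type*} (i : σ) :
    (Finsupp.single i 1).degree = 1 := by
  exact Finsupp.degree_single i 1

lemma finsupp_exists_le {σ : Type*} :
    ∀ (c : ℕ) (d : σ →₀ ℕ), c ≤ d.degree → ∃ d1 : σ →₀ ℕ, d1 ≤ d ∧ d1.degree = c
  | 0, d, _ => ⟨0, zero_le, map_zero _⟩
  | c + 1, d, h => by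
    obtain ⟨d1, hle, hdeg⟩ := finsupp_exists_le c d (le_trans (Nat.le_succ c) h)
    have hne : ∃ i, d1 i < d i := by
      by_contra hc
      push_neg at hc
      have h1 : d = d1 := le_antisymm (Finsupp.le_def.2 hc) hle
      rw [h1, hdeg] at h
      omega
    obtain ⟨i, hi⟩ := hne
    refine ⟨d1 + Finsupp.single i 1, Finsupp.le_def.2 fun j => ?_, ?_⟩
    · rcases eq_or_ne j i with rfl | hj
      · simpa using hi
      · simpa [Finsupp.single_apply, hj.symm] using Finsupp.le_def.1 hle j
    · rw [finsupp_degree_add, hdeg, finsupp_degree_single]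

lemma finsupp_split {σ : Type*} (d : σ →₀ ℕ) (c c' : ℕ) (h : d.degree = c + c') :
    ∃ d1 d2 : σ →₀ ℕ, d = d1 + d2 ∧ d1.degree = c ∧ d2.degree = c' := by
  obtain ⟨d1, hle, hdeg⟩ := finsupp_exists_le c d (by omega)
  refine ⟨d1, d - d1, (add_tsub_cancel_of_le hle).symm, hdeg, ?_⟩
  have := finsupp_degree_add d1 (d - d1)
  rw [add_tsub_cancel_of_le hle, h, hdeg] at this
  omega

lemma homogeneousSubmodule_le_mul {σ : Type*} (c c' : ℕ) :
    homogeneousSubmodule σ ℂ (c + c') ≤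
      homogeneousSubmodule σ ℂ c * homogeneousSubmodule σ ℂ c' := by
  intro p hp
  have key : (∑ dd ∈ p.support, monomial dd (coeff dd p)) ∈
      homogeneousSubmodule σ ℂ c * homogeneousSubmodule σ ℂ c' := by
    apply Submodule.sum_mem
    intro dd hdd
    have hph : p.IsHomogeneous (c + c') := hp
    have hdeg : dd.degree = c + c' := by
      have h0 := hph (mem_support_iff.mp hdd)
      rwa [Finsupp.degree_eq_weight_one]
    obtain ⟨d1, d2, rfl, h1, h2⟩ := finsupp_split dd c c' hdeg
    have hmono : monomial (d1 + d2) (coeff (d1 + d2) p)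
        = monomial d1 (coeff (d1 + d2) p) * monomial d2 1 := by
      rw [monomial_mul, mul_one]
    rw [hmono]
    exact Submodule.mul_mem_mul (isHomogeneous_monomial _ h1) (isHomogeneous_monomial _ h2)
  rwa [support_sum_monomial_coeff] at key


def GenLE {n : ℕ} (J : Ideal (MvPolynomial (Fin (n + 1)) ℂ)) (c : ℕ) : Prop :=
  ∃ S : Set (MvPolynomial (Fin (n + 1)) ℂ),
    (∀ f ∈ S, ∃ e ≤ c, f.IsHomogeneous e) ∧ J = Ideal.span S

lemma GenLE.mul {n : ℕ} {J K : Ideal (MvPolynomial (Fin (n + 1)) ℂ)} {c c' : ℕ}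
    (h1 : GenLE J c) (h2 : GenLE K c') : GenLE (J * K) (c + c') := by
  obtain ⟨S, hS, hJ⟩ := h1
  obtain ⟨T, hT, hK⟩ := h2
  refine ⟨S * T, ?_, by rw [hJ, hK, Ideal.span_mul_span']⟩
  intro f hf
  rw [Set.mem_mul] at hf
  obtain ⟨g, hg, h, hh, rfl⟩ := hf
  obtain ⟨e1, he1, hg'⟩ := hS g hg
  obtain ⟨e2, he2, hh'⟩ := hT h hh
  exact ⟨e1 + e2, add_le_add he1 he2, hg'.mul hh'⟩

lemma GenLE.pow {n : ℕ} {J : Ideal (MvPolynomial (Fin (n + 1)) ℂ)} {c : ℕ}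
    (h : GenLE J c) : ∀ u : ℕ, GenLE (J ^ u) (c * u)
  | 0 => by
    rw [pow_zero, Nat.mul_zero]
    refine ⟨{1}, ?_, ?_⟩
    · rintro f rfl
      exact ⟨0, le_refl 0, isHomogeneous_one _ _⟩
    · rw [Ideal.span_singleton_one, Ideal.one_eq_top]
  | u + 1 => by
    rw [pow_succ, Nat.mul_succ]
    exact (h.pow u).mul h

lemma component_mul_ge {n : ℕ} (J K : Ideal (MvPolynomial (Fin (n + 1)) ℂ)) (sJ sK : ℕ) :
    idealComponent J sJ * idealComponent K sK ≤ idealComponent (J * K) (sJ + sK) := by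
  rw [Submodule.mul_le]
  intro x hx y hy
  obtain ⟨hx1, hx2⟩ := Submodule.mem_inf.mp hx
  obtain ⟨hy1, hy2⟩ := Submodule.mem_inf.mp hy
  have hx2' : x.IsHomogeneous sJ := hx2
  have hy2' : y.IsHomogeneous sK := hy2
  exact Submodule.mem_inf.mpr ⟨Ideal.mul_mem_mul hx1 hy1,
    (mem_homogeneousSubmodule _ _).mpr (hx2'.mul hy2')⟩

lemma comp_mul_mem {n : ℕ} {J K : Ideal (MvPolynomial (Fin (n + 1)) ℂ)}
    {sJ sK e1 e2 : ℕ} (he1 : e1 ≤ sJ) (he2 : e2 ≤ sK)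
    {g h : MvPolynomial (Fin (n + 1)) ℂ} (hgJ : g ∈ J) (hg : g.IsHomogeneous e1)
    (hhK : h ∈ K) (hh : h.IsHomogeneous e2) (r : MvPolynomial (Fin (n + 1)) ℂ) :
    homogeneousComponent (sJ + sK) (r * (g * h)) ∈
      idealComponent J sJ * idealComponent K sK := by
  nth_rewrite 1 [← sum_homogeneousComponent r]
  rw [Finset.sum_mul, map_sum]
  apply Submodule.sum_mem
  intro j _
  have hhom : (homogeneousComponent j r * (g * h)) ∈
      homogeneousSubmodule (Fin (n + 1)) ℂ (j + (e1 + e2)) :=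
    (homogeneousComponent_isHomogeneous j r).mul (hg.mul hh)
  rw [homogeneousComponent_of_mem hhom]
  split_ifs with hcase
  · have hj : j = (sJ - e1) + (sK - e2) := by omega
    have hm : homogeneousComponent j r ∈
        homogeneousSubmodule (Fin (n + 1)) ℂ (sJ - e1) *
          homogeneousSubmodule (Fin (n + 1)) ℂ (sK - e2) :=
      homogeneousSubmodule_le_mul _ _ (by rw [← hj]; exact homogeneousComponent_mem j r)
    refine Submodule.mul_induction_on
      (C := fun x => x * (g * h) ∈ idealComponent J sJ * idealComponent K sK) hm
      (fun m1 h1 m2 h2 => ?_) (fun x y hx hy => by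
        show (x + y) * (g * h) ∈ _
        rw [add_mul]; exact Submodule.add_mem _ hx hy)
    show m1 * m2 * (g * h) ∈ _
    have hrw : m1 * m2 * (g * h) = (m1 * g) * (m2 * h) := by ring
    rw [hrw]
    have hm1 : m1.IsHomogeneous (sJ - e1) := h1
    have hm2 : m2.IsHomogeneous (sK - e2) := h2
    refine Submodule.mul_mem_mul (Submodule.mem_inf.mpr ⟨J.mul_mem_left m1 hgJ, ?_⟩)
      (Submodule.mem_inf.mpr ⟨K.mul_mem_left m2 hhK, ?_⟩)
    · have := hm1.mul hg
      rwa [Nat.sub_add_cancel he1] at this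
    · have := hm2.mul hh
      rwa [Nat.sub_add_cancel he2] at this
  · exact Submodule.zero_mem _

lemma component_mul_le {n : ℕ} {J K : Ideal (MvPolynomial (Fin (n + 1)) ℂ)}
    {cJ cK : ℕ} (sJ sK : ℕ) (hJ : GenLE J cJ) (hK : GenLE K cK)
    (h1 : cJ ≤ sJ) (h2 : cK ≤ sK) :
    idealComponent (J * K) (sJ + sK) ≤ idealComponent J sJ * idealComponent K sK := by
  intro p hp
  obtain ⟨hpJK, hphom⟩ := Submodule.mem_inf.mp hp
  obtain ⟨S, hS, hJS⟩ := hJ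
  obtain ⟨T, hT, hKT⟩ := hK
  have hpmem : p ∈ Submodule.span (MvPolynomial (Fin (n + 1)) ℂ) (S * T) := by
    have : p ∈ J * K := hpJK
    rwa [hJS, hKT, Ideal.span_mul_span'] at this
  rw [Submodule.mem_span_set] at hpmem
  obtain ⟨c, hsupp, hsum⟩ := hpmem
  have hpcomp : homogeneousComponent (sJ + sK) p = p := by
    rw [homogeneousComponent_of_mem hphom, if_pos rfl]
  rw [← hpcomp, ← hsum, Finsupp.sum, map_sum]
  apply Submodule.sum_mem
  intro t ht
  obtain ⟨g, hg, h, hh, rfl⟩ := Set.mem_mul.mp (hsupp ht)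
  obtain ⟨e1, he1le, hge⟩ := hS g hg
  obtain ⟨e2, he2le, hhe⟩ := hT h hh
  rw [smul_eq_mul]
  exact comp_mul_mem (le_trans he1le h1) (le_trans he2le h2)
    (hJS ▸ Ideal.subset_span hg) hge (hKT ▸ Ideal.subset_span hh) hhe _

lemma compB {n a b : ℕ} {I : Ideal (MvPolynomial (Fin (n + 1)) ℂ)} :
    ∀ u : ℕ, (idealComponent (I ^ a) b) ^ u ≤ idealComponent (I ^ (a * u)) (b * u)
  | 0 => by
    rw [Nat.mul_zero, Nat.mul_zero, pow_zero (idealComponent (I ^ a) b), Submodule.one_le]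
    refine Submodule.mem_inf.mpr ⟨?_, isHomogeneous_one _ _⟩
    show (1 : MvPolynomial (Fin (n + 1)) ℂ) ∈ I ^ 0
    rw [pow_zero I, Ideal.one_eq_top]
    trivial
  | u + 1 => by
    rw [pow_succ]
    calc (idealComponent (I ^ a) b) ^ u * idealComponent (I ^ a) b
        ≤ idealComponent (I ^ (a * u)) (b * u) * idealComponent (I ^ a) b :=
          mul_le_mul' (compB u) le_rfl
      _ ≤ idealComponent (I ^ (a * u) * I ^ a) (b * u + b) := component_mul_ge _ _ _ _
      _ = idealComponent (I ^ (a * (u + 1))) (b * (u + 1)) := by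
          rw [← pow_add, Nat.mul_succ, Nat.mul_succ]

lemma compA {n d a b : ℕ} {I : Ideal (MvPolynomial (Fin (n + 1)) ℂ)}
    (hI : GenLE I d) (hq : d * a < b) :
    ∀ u : ℕ, idealComponent (I ^ (a * u)) (b * u) ≤ (idealComponent (I ^ a) b) ^ u
  | 0 => by
    rw [Nat.mul_zero, Nat.mul_zero, pow_zero (idealComponent (I ^ a) b)]
    intro p hp
    obtain ⟨hp1, hp2⟩ := Submodule.mem_inf.mp hp
    have h0 : homogeneousComponent 0 p = p := by
      rw [homogeneousComponent_of_mem hp2, if_pos rfl]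
    have hpC : C (coeff 0 p) = p := by
      conv_rhs => rw [← h0]
      exact (homogeneousComponent_zero (φ := p)).symm
    rw [Submodule.mem_one]
    exact ⟨coeff 0 p, by rw [MvPolynomial.algebraMap_eq]; exact hpC⟩
  | u + 1 => by
    have hga : GenLE (I ^ a) (d * a) := hI.pow a
    have hgu : GenLE (I ^ (a * u)) (d * (a * u)) := hI.pow (a * u)
    have e1 : a * (u + 1) = a * u + a := by ring
    have e2 : b * (u + 1) = b * u + b := by ring
    rw [e1, e2, pow_add]
    calc idealComponent (I ^ (a * u) * I ^ a) (b * u + b)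
        ≤ idealComponent (I ^ (a * u)) (b * u) * idealComponent (I ^ a) b := by
          refine component_mul_le _ _ hgu hga ?_ (le_of_lt hq)
          calc d * (a * u) = (d * a) * u := by ring
            _ ≤ b * u := Nat.mul_le_mul_right u (le_of_lt hq)
      _ ≤ (idealComponent (I ^ a) b) ^ u * idealComponent (I ^ a) b :=
          mul_le_mul' (compA hI hq u) le_rfl
      _ = (idealComponent (I ^ a) b) ^ (u + 1) := (pow_succ _ _).symm

lemma comp_eq {n d a b : ℕ} {I : Ideal (MvPolynomial (Fin (n + 1)) ℂ)}
    (hI : GenLE I d) (hq : d * a < b) (u : ℕ) :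
    idealComponent (I ^ (a * u)) (b * u) = (idealComponent (I ^ a) b) ^ u :=
  le_antisymm (compA hI hq u) (compB u)



/-- Let `I ⊆ ℂ[x₀,…,xₙ]` be a homogeneous ideal generated in degrees `≤ d`,
`v` any `ℤⁿ`-valued function on `ℂ[x₁,…,xₙ]`, and `a, b` coprime positive integers with
`b > d·a`, `q = b/a`. With `L = ((I^a)_b)|_{x₀=1}`,
`U_{a,b} = {(α,u) : u ∈ ℤ_{≥0}, α ∈ v(Lᵘ ∖ {0})}`,
`U_I = {(α,s,t) : s,t ∈ ℤ_{≥0}, α ∈ v(((Iᵗ)_s)|_{x₀=1} ∖ {0})}`, and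
`H_q = {(α,s,t) : s = q·t}`, the map `(α,u) ↦ (α, b·u, a·u)` is a bijection from
`U_{a,b}` onto `U_I ∩ H_q`. -/
theorem graded_semigroup_slice_bijection (n d : ℕ)
    (I : Ideal (MvPolynomial (Fin (n + 1)) ℂ))
    (hI : ∃ S : Set (MvPolynomial (Fin (n + 1)) ℂ),
      (∀ f ∈ S, ∃ e ≤ d, f.IsHomogeneous e) ∧ I = Ideal.span S)
    (v : MvPolynomial (Fin n) ℂ → (Fin n → ℤ))
    (a b : ℕ) (ha : 0 < a) (hb : 0 < b) (hab : Nat.Coprime a b) (hq : d * a < b)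
    (L : Submodule ℂ (MvPolynomial (Fin n) ℂ))
    (hL : L = Submodule.map (dehom n).toLinearMap (idealComponent (I ^ a) b))
    (Uab : Set ((Fin n → ℝ) × ℝ))
    (hUab : Uab = {p | ∃ u : ℕ, ∃ α ∈ v ''
        (((L ^ u : Submodule ℂ (MvPolynomial (Fin n) ℂ)) : Set (MvPolynomial (Fin n) ℂ)) \ {0}),
      p = (fun i => (α i : ℝ), (u : ℝ))})
    (UI : Set ((Fin n → ℝ) × ℝ × ℝ))
    (hUI : UI = {p | ∃ s t : ℕ, ∃ α ∈ v ''
        ((⇑(dehom n) ''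
          ((idealComponent (I ^ t) s : Set (MvPolynomial (Fin (n + 1)) ℂ)))) \ {0}),
      p = (fun i => (α i : ℝ), (s : ℝ), (t : ℝ))})
    (Hq : Set ((Fin n → ℝ) × ℝ × ℝ))
    (hHq : Hq = {p | p.2.1 = ((b : ℝ) / (a : ℝ)) * p.2.2}) :
    Set.BijOn (fun p : (Fin n → ℝ) × ℝ => (p.1, (b : ℝ) * p.2, (a : ℝ) * p.2))
      Uab (UI ∩ Hq) := by
  have hgen : GenLE I d := hI
  have haR : (a : ℝ) ≠ 0 := Nat.cast_ne_zero.mpr ha.ne'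
  have key : ∀ u : ℕ, ⇑(dehom n) '' ((idealComponent (I ^ (a * u)) (b * u) :
      Set (MvPolynomial (Fin (n + 1)) ℂ))) =
      ((L ^ u : Submodule ℂ (MvPolynomial (Fin n) ℂ)) : Set (MvPolynomial (Fin n) ℂ)) := by
    intro u
    have h1 : Submodule.map (dehom n).toLinearMap (idealComponent (I ^ (a * u)) (b * u))
        = L ^ u := by
      rw [comp_eq hgen hq u, Submodule.map_pow, hL]
    rw [← h1, Submodule.map_coe]
    rfl
  subst hUab hUI hHq
  refine ⟨?_, ?_, ?_⟩
  · rintro p ⟨u, α, hα, rfl⟩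
    constructor
    · refine ⟨b * u, a * u, α, ?_, ?_⟩
      · rw [key u]
        exact hα
      · show ((fun i => (α i : ℝ)), (b : ℝ) * (u : ℝ), (a : ℝ) * (u : ℝ))
          = ((fun i => (α i : ℝ)), ((b * u : ℕ) : ℝ), ((a * u : ℕ) : ℝ))
        push_cast
        rfl
    · show (b : ℝ) * (u : ℝ) = ((b : ℝ) / (a : ℝ)) * ((a : ℝ) * (u : ℝ))
      field_simp
  · intro p1 _ p2 _ heq
    simp only [Prod.ext_iff] at heq
    exact Prod.ext heq.1 (mul_left_cancel₀ haR heq.2.2)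
  · rintro q ⟨⟨s, t, α, hα, rfl⟩, hq2⟩
    simp only [Set.mem_setOf_eq] at hq2
    have hstR : (s : ℝ) * (a : ℝ) = (b : ℝ) * (t : ℝ) := by
      rw [hq2]; field_simp
    have hst : s * a = b * t := by exact_mod_cast hstR
    have hdvd : a ∣ b * t := ⟨s, by rw [← hst]; ring⟩
    have hat : a ∣ t := hab.dvd_of_dvd_mul_left hdvd
    obtain ⟨u, rfl⟩ := hat
    have hsu : s = b * u := by
      have h2 : a * s = a * (b * u) := by
        calc a * s = s * a := by ring
          _ = b * (a * u) := hst
          _ = a * (b * u) := by ring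
      exact Nat.eq_of_mul_eq_mul_left ha h2
    subst hsu
    refine ⟨((fun i => (α i : ℝ)), (u : ℝ)), ⟨u, α, ?_, rfl⟩, ?_⟩
    · rw [← key u]
      exact hα
    · show ((fun i => (α i : ℝ)), (b : ℝ) * (u : ℝ), (a : ℝ) * (u : ℝ))
        = ((fun i => (α i : ℝ)), ((b * u : ℕ) : ℝ), ((a * u : ℕ) : ℝ))
      push_cast
      rfl
end

section
/- Let I ⊆ ℂ[x₀,…,xₙ] be a nonzero ideal generated by monomials in x₀,…,xₙ, and let m(I) := {(a₀,…,aₙ) ∈ ℤ_{≥0}^{n+1} : x₀^{a₀}·x₁^{a₁}⋯xₙ^{aₙ} ∈ I} be its set of exponent vectors. Let v be the ℤⁿ-valued valuation on ℂ[x₁,…,xₙ] assigning to each nonzero polynomial P the lexicographically smallest exponent vector among the monomials appearing in P with nonzero coefficient, and let Δ(I) ⊆ ℝ^{n+1} be the Newton–Okounkov body of I constructed from v. Then Δ(I) equals the convex hull of m(I) in ℝ^{n+1}, i.e. the (unbounded) Newton polytope of I. -/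
open MvPolynomial

/-- The lexicographic linear order on `ℤⁿ`. -/
noncomputable instance lexPiIntLinearOrder (n : ℕ) : LinearOrder (Lex (Fin n → ℤ)) :=
  @Pi.Lex.linearOrder (Fin n) (fun _ => ℤ) Fin.instLinearOrder
    (inferInstanceAs (WellFoundedLT (Fin n))) inferInstance

/-- The valuation on `ℂ[x₁,…,xₙ]` assigning to a nonzero polynomial the lexicographically
smallest exponent vector among its monomials (and `0` to the zero polynomial). -/
noncomputable def vLexMin (n : ℕ) (P : MvPolynomial (Fin n) ℂ) : Fin n → ℤ :=
  if h : P = 0 then 0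
  else
    ofLex ((P.support.image fun m => toLex fun i => (m i : ℤ)).min'
      (Finset.image_nonempty.2 (MvPolynomial.support_nonempty.2 h)))

/-- The smallest closed convex cone containing a subset `U` of a real vector space. -/
def closedConvexConeHull {E : Type*} [AddCommGroup E] [Module ℝ E] [TopologicalSpace E]
    (U : Set E) : Set E :=
  ⋂₀ {C : Set E | U ⊆ C ∧ IsClosed C ∧ Convex ℝ C ∧ ∀ c : ℝ, 0 ≤ c → ∀ x ∈ C, c • x ∈ C}

/-- The graded semigroup `U_I ⊆ ℝⁿ × ℝ²` of a homogeneous ideal `I ⊆ ℂ[x₀,…,xₙ]` with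
respect to a `ℤⁿ`-valued function `w` on `ℂ[x₁,…,xₙ]`. -/
def gradedSemigroup {n : ℕ} (w : MvPolynomial (Fin n) ℂ → (Fin n → ℤ))
    (I : Ideal (MvPolynomial (Fin (n + 1)) ℂ)) : Set ((Fin n → ℝ) × ℝ × ℝ) :=
  {p | ∃ s t : ℕ, ∃ α ∈ w ''
      ((⇑(dehom n) '' ((idealComponent (I ^ t) s : Set (MvPolynomial (Fin (n + 1)) ℂ)))) \ {0}),
    p = (fun i => (α i : ℝ), (s : ℝ), (t : ℝ))}

/-- `underlineΔ(I) = Σ(U_I) ∩ {t = 1} ⊆ ℝⁿ × ℝ`. -/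
def underlineDelta {n : ℕ} (w : MvPolynomial (Fin n) ℂ → (Fin n → ℤ))
    (I : Ideal (MvPolynomial (Fin (n + 1)) ℂ)) : Set ((Fin n → ℝ) × ℝ) :=
  {p | (p.1, p.2, (1 : ℝ)) ∈ closedConvexConeHull (gradedSemigroup w I)}

/-- The shear isomorphism `τ((a₁,…,aₙ),s) = (s − (a₁+⋯+aₙ), a₁,…,aₙ)`. -/
def tauMap (n : ℕ) : (Fin n → ℝ) × ℝ → (Fin (n + 1) → ℝ) :=
  fun p => Fin.cons (p.2 - ∑ i, p.1 i) p.1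

/-- The Newton–Okounkov body `Δ(I) ⊆ ℝ^(n+1)` of a homogeneous ideal `I ⊆ ℂ[x₀,…,xₙ]`. -/
def NObody {n : ℕ} (w : MvPolynomial (Fin n) ℂ → (Fin n → ℤ))
    (I : Ideal (MvPolynomial (Fin (n + 1)) ℂ)) : Set (Fin (n + 1) → ℝ) :=
  tauMap n '' underlineDelta w I


open Pointwise in
private noncomputable abbrev mon {σ : Type*} (m : σ →₀ ℕ) : MvPolynomial σ ℂ := monomial m (1:ℂ)

private local instance : IsWellOrder ℕ (· < ·) := inferInstance

private lemma dickson {k : ℕ} (M : Set (Fin k → ℕ)) :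
    ∃ G : Set (Fin k → ℕ), G.Finite ∧ G ⊆ M ∧ ∀ a ∈ M, ∃ g ∈ G, g ≤ a := by
  classical
  refine ⟨{a ∈ M | ∀ b ∈ M, ¬ b < a}, ?_, fun a ha => ha.1, ?_⟩
  · refine IsAntichain.finite_of_partiallyWellOrderedOn (r := (· ≤ ·)) ?_
      ((Set.isPWO_of_wellQuasiOrderedLE _).mono (fun a ha => ha.1))
    intro g₁ hg₁ g₂ hg₂ hne hle
    exact hg₂.2 g₁ hg₁.1 (lt_of_le_of_ne hle hne)
  · intro a ha
    have hwf : {b ∈ M | b ≤ a}.IsWF := (Set.isPWO_of_wellQuasiOrderedLE _).isWF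
    have hne : {b ∈ M | b ≤ a}.Nonempty := ⟨a, ha, le_refl a⟩
    refine ⟨hwf.min hne, ⟨(hwf.min_mem hne).1, ?_⟩, (hwf.min_mem hne).2⟩
    intro b hb hlt
    exact hwf.not_lt_min hne ⟨hb, hlt.le.trans (hwf.min_mem hne).2⟩ hlt

private lemma mem_span_monomial_iff {σ : Type*} {S : Set (σ →₀ ℕ)} {P : MvPolynomial σ ℂ} :
    P ∈ Ideal.span (mon '' S) ↔ ∀ a ∈ P.support, ∃ m ∈ S, m ≤ a := by
  classical
  constructor
  · intro hP
    refine Submodule.span_induction ?_ ?_ ?_ ?_ hP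
    · rintro x ⟨m, hm, rfl⟩ a ha
      have := MvPolynomial.support_monomial_subset ha
      simp only [Finset.mem_singleton] at this
      exact ⟨m, hm, this ▸ le_refl _⟩
    · intro a ha; simp at ha
    · intro x y _ _ hx hy a ha
      rcases Finset.mem_union.1 (MvPolynomial.support_add ha) with h | h
      exacts [hx a h, hy a h]
    · intro c x _ hx a ha
      have h2 := MvPolynomial.support_mul c x ha
      rw [Finset.mem_add] at h2
      obtain ⟨b, _, d, hd, rfl⟩ := h2
      obtain ⟨m, hm, hmd⟩ := hx d hd
      exact ⟨m, hm, hmd.trans (le_add_self)⟩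
  · intro h
    rw [← P.support_sum_monomial_coeff]
    refine Ideal.sum_mem _ fun a ha => ?_
    obtain ⟨m, hm, hma⟩ := h a ha
    have : monomial a (P.coeff a) = monomial (a - m) (P.coeff a) * mon m := by
      rw [monomial_mul, mul_one, tsub_add_cancel_of_le hma]
    rw [this]
    exact Ideal.mul_mem_left _ _ (Ideal.subset_span ⟨m, hm, rfl⟩)

open Pointwise in
private def sumSet {σ : Type*} (S : Set (σ →₀ ℕ)) : ℕ → Set (σ →₀ ℕ)
  | 0 => {0}
  | t + 1 => S + sumSet S t

open Pointwise in
private lemma span_mon_pow {σ : Type*} (S : Set (σ →₀ ℕ)) (t : ℕ) :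
    Ideal.span (mon (σ := σ) '' S) ^ t = Ideal.span (mon '' sumSet S t) := by
  induction t with
  | zero =>
      rw [pow_zero, Ideal.one_eq_top, sumSet, Set.image_singleton]
      have : mon (σ := σ) 0 = 1 := by simp [mon]
      rw [this, Ideal.span_singleton_one]
  | succ t ih =>
      rw [pow_succ, ih, Ideal.span_mul_span']
      congr 1
      rw [sumSet]
      ext x
      constructor
      · rintro ⟨_, ⟨m, hm, rfl⟩, _, ⟨m', hm', rfl⟩, rfl⟩
        exact ⟨m' + m, Set.add_mem_add hm' hm, by simp [mon, monomial_mul, add_comm]⟩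
      · rintro ⟨_, hmem, rfl⟩
        rw [Set.mem_add] at hmem
        obtain ⟨m, hm, m', hm', rfl⟩ := hmem
        exact ⟨mon m', ⟨m', hm', rfl⟩, mon m, ⟨m, hm, rfl⟩, by simp [mon, monomial_mul, add_comm]⟩

open Pointwise in
private lemma mem_sumSet {σ : Type*} {S : Set (σ →₀ ℕ)} {t : ℕ} {m : σ →₀ ℕ}
    (h : m ∈ sumSet S t) :
    ∃ b : Fin t → (σ →₀ ℕ), (∀ i, b i ∈ S) ∧ ∑ i, b i = m := by
  induction t generalizing m with
  | zero => exact ⟨fun i => 0, fun i => i.elim0, by rw [sumSet] at h; simpa [eq_comm] using h⟩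
  | succ t ih =>
      rw [sumSet, Set.mem_add] at h
      obtain ⟨x, hx, y, hy, rfl⟩ := h
      obtain ⟨b, hb, rfl⟩ := ih hy
      refine ⟨Fin.cons x b, fun i => ?_, by rw [Fin.sum_univ_succ]; simp⟩
      refine Fin.cases ?_ ?_ i <;> simp [hx, hb]

private noncomputable def ftail {n : ℕ} (d : Fin (n+1) →₀ ℕ) : Fin n →₀ ℕ :=
  Finsupp.equivFunOnFinite.symm (fun j => d j.succ)

@[simp] private lemma ftail_apply {n : ℕ} (d : Fin (n+1) →₀ ℕ) (j : Fin n) :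
    ftail d j = d j.succ := by simp [ftail]

private lemma dehom_monomial {n : ℕ} (d : Fin (n+1) →₀ ℕ) (c : ℂ) :
    dehom n (monomial d c) = monomial (ftail d) c := by
  rw [dehom, aeval_monomial, monomial_eq, Finsupp.prod_pow, Finsupp.prod_pow,
    Fin.prod_univ_succ]
  simp [algebraMap_eq]

private lemma vLexMin_mem_support {n : ℕ} {Q : MvPolynomial (Fin n) ℂ} (hQ : Q ≠ 0) :
    ∃ m ∈ Q.support, vLexMin n Q = fun i => (m i : ℤ) := by
  rw [vLexMin, dif_neg hQ]
  have := Finset.min'_mem (Q.support.image fun m => toLex fun i => (m i : ℤ))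
    (Finset.image_nonempty.2 (MvPolynomial.support_nonempty.2 hQ))
  rw [Finset.mem_image] at this
  obtain ⟨m, hm, heq⟩ := this
  exact ⟨m, hm, by rw [← heq]; rfl⟩

private lemma vLexMin_monomial {n : ℕ} (m : Fin n →₀ ℕ) {c : ℂ} (hc : c ≠ 0) :
    vLexMin n (monomial m c) = fun i => (m i : ℤ) := by
  have h0 : (monomial m c : MvPolynomial (Fin n) ℂ) ≠ 0 := by
    simp [monomial_eq_zero, hc]
  obtain ⟨m', hm', heq⟩ := vLexMin_mem_support h0
  rw [support_monomial, if_neg hc, Finset.mem_singleton] at hm'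
  rw [heq, hm']

private lemma support_dehom {n : ℕ} (P : MvPolynomial (Fin (n+1)) ℂ) :
    ∀ m ∈ (dehom n P).support, ∃ a ∈ P.support, m = ftail a := by
  classical
  intro m hm
  conv at hm => rw [← P.support_sum_monomial_coeff, map_sum]
  have := MvPolynomial.support_sum hm
  rw [Finset.mem_biUnion] at this
  obtain ⟨a, ha, hma⟩ := this
  rw [dehom_monomial] at hma
  have := support_monomial_subset hma
  rw [Finset.mem_singleton] at this
  exact ⟨a, ha, this⟩

private lemma degree_eq_sum_univ {k : ℕ} (d : Fin k →₀ ℕ) :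
    Finsupp.degree d = ∑ i, d i :=
  Finset.sum_subset (Finset.subset_univ _) (fun i _ hi => Finsupp.notMem_support_iff.1 hi)

private lemma memU_of_monomial {n : ℕ} (I : Ideal (MvPolynomial (Fin (n+1)) ℂ))
    (a : Fin (n+1) →₀ ℕ) (ha : monomial a (1:ℂ) ∈ I) :
    ((fun j => ((a j.succ : ℕ) : ℝ)), (∑ i, ((a i : ℕ) : ℝ)), (1:ℝ))
      ∈ gradedSemigroup (vLexMin n) I := by
  have hd : dehom n (monomial a (1:ℂ)) = monomial (ftail a) 1 := dehom_monomial a 1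
  have hne : (monomial (ftail a) (1:ℂ) : MvPolynomial (Fin n) ℂ) ≠ 0 := by
    simp [monomial_eq_zero]
  refine ⟨Finsupp.degree a, 1, vLexMin n (monomial (ftail a) 1),
    ⟨monomial (ftail a) 1, ⟨⟨monomial a 1, ?_, hd⟩, hne⟩, rfl⟩, ?_⟩
  · rw [SetLike.mem_coe, idealComponent, Submodule.mem_inf]
    refine ⟨by simpa [pow_one] using ha, ?_⟩
    rw [mem_homogeneousSubmodule]
    exact isHomogeneous_monomial _ rfl
  · rw [vLexMin_monomial _ one_ne_zero]
    refine Prod.ext (funext fun j => ?_) (Prod.ext ?_ ?_)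
    · simp
    · show (∑ i, ((a i : ℕ) : ℝ)) = ((Finsupp.degree a : ℕ) : ℝ)
      rw [degree_eq_sum_univ]
      push_cast
      rfl
    · norm_num

private lemma memU_elim {n : ℕ} {S : Set (Fin (n+1) →₀ ℕ)} {p : (Fin n → ℝ) × ℝ × ℝ}
    (hp : p ∈ gradedSemigroup (vLexMin n) (Ideal.span (mon '' S))) :
    ∃ (t : ℕ) (a : Fin (n+1) →₀ ℕ) (b : Fin t → (Fin (n+1) →₀ ℕ)),
      (∀ i, b i ∈ S) ∧ (∑ i, b i) ≤ a ∧
      p = ((fun j => ((a j.succ : ℕ) : ℝ)), (∑ i, ((a i : ℕ) : ℝ)), (t : ℝ)) := by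
  obtain ⟨s, t, α, ⟨Q, ⟨⟨P, hPmem, rfl⟩, hQne⟩, rfl⟩, rfl⟩ := hp
  have hQ : dehom n P ≠ 0 := by simpa using hQne
  obtain ⟨m, hm, hvl⟩ := vLexMin_mem_support hQ
  obtain ⟨a, haP, rfl⟩ := support_dehom P m hm
  rw [SetLike.mem_coe, idealComponent, Submodule.mem_inf] at hPmem
  obtain ⟨hPI, hPhom⟩ := hPmem
  rw [Submodule.restrictScalars_mem, span_mon_pow, mem_span_monomial_iff] at hPI
  obtain ⟨m', hm', hma⟩ := hPI a haP
  obtain ⟨b, hb, rfl⟩ := mem_sumSet hm'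
  rw [mem_homogeneousSubmodule] at hPhom
  have hdeg : Finsupp.degree a = s := by
    rw [Finsupp.degree_eq_weight_one]
    exact hPhom (MvPolynomial.mem_support_iff.1 haP)
  refine ⟨t, a, b, hb, hma, ?_⟩
  refine Prod.ext (funext fun j => ?_) (Prod.ext ?_ rfl)
  · rw [hvl]; simp
  · show ((s : ℕ) : ℝ) = ∑ i, ((a i : ℕ) : ℝ)
    rw [← hdeg, degree_eq_sum_univ]
    push_cast
    rfl

section hull
variable {E : Type*} [AddCommGroup E] [Module ℝ E] [TopologicalSpace E]

private lemma subset_closedConvexConeHull (U : Set E) : U ⊆ closedConvexConeHull U :=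
  fun x hx => Set.mem_sInter.2 fun _ hC => hC.1 hx

private lemma closedConvexConeHull_subset {U C : Set E} (h1 : U ⊆ C) (h2 : IsClosed C)
    (h3 : Convex ℝ C) (h4 : ∀ c : ℝ, 0 ≤ c → ∀ x ∈ C, c • x ∈ C) :
    closedConvexConeHull U ⊆ C :=
  Set.sInter_subset_of_mem ⟨h1, h2, h3, h4⟩

private lemma convex_closedConvexConeHull (U : Set E) : Convex ℝ (closedConvexConeHull U) :=
  convex_sInter fun _ hC => hC.2.2.1

end hull

private lemma tauMap_comb {n : ℕ} (c d : ℝ) (p q : (Fin n → ℝ) × ℝ) :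
    tauMap n (c • p + d • q) = c • tauMap n p + d • tauMap n q := by
  funext i
  refine Fin.cases ?_ (fun j => ?_) i
  · simp only [tauMap, Fin.cons_zero, Prod.fst_add, Prod.snd_add, Prod.smul_fst, Prod.smul_snd,
      Pi.add_apply, Pi.smul_apply, smul_eq_mul, mul_sub, Finset.sum_add_distrib, Finset.mul_sum]
    ring
  · simp [tauMap]

private lemma tauMap_smul {n : ℕ} (c : ℝ) (p : (Fin n → ℝ) × ℝ) :
    tauMap n (c • p) = c • tauMap n p := by
  have h := tauMap_comb c 0 p p
  simpa using h

private lemma tauMap_cast {n : ℕ} (a : Fin (n+1) →₀ ℕ) :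
    tauMap n ((fun j => ((a j.succ : ℕ) : ℝ)), ∑ i, ((a i : ℕ) : ℝ))
      = fun i => ((a i : ℕ) : ℝ) := by
  funext i
  refine Fin.cases ?_ (fun j => ?_) i
  · simp [tauMap, Fin.sum_univ_succ]
  · simp [tauMap]

/-- For a nonzero monomial ideal `I ⊆ ℂ[x₀,…,xₙ]` with exponent set
`m(I) = {a ∈ ℤ_{≥0}^(n+1) : x^a ∈ I}`, and the valuation `v` on `ℂ[x₁,…,xₙ]` taking the
lexicographically smallest exponent vector, the Newton–Okounkov body `Δ(I)` equals the
convex hull of `m(I)` in `ℝ^(n+1)`, i.e. the (unbounded) Newton polytope of `I`. -/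
theorem NObody_monomial_ideal (n : ℕ)
    (I : Ideal (MvPolynomial (Fin (n + 1)) ℂ)) (hI0 : I ≠ ⊥)
    (hImonomial : ∃ S : Set (Fin (n + 1) →₀ ℕ),
      I = Ideal.span ((fun m => (monomial m (1 : ℂ) : MvPolynomial (Fin (n + 1)) ℂ)) '' S)) :
    NObody (vLexMin n) I =
      convexHull ℝ
        ((fun (a : Fin (n + 1) → ℕ) => fun i => (a i : ℝ)) ''
          {a : Fin (n + 1) → ℕ |
            (monomial (Finsupp.equivFunOnFinite.symm a) (1 : ℂ) :
              MvPolynomial (Fin (n + 1)) ℂ) ∈ I}) := by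
  classical
  obtain ⟨S, hIS⟩ := hImonomial
  set castF : (Fin (n + 1) → ℕ) → (Fin (n + 1) → ℝ) :=
    fun (a : Fin (n + 1) → ℕ) => fun i => (a i : ℝ) with hcastF
  set Mset : Set (Fin (n + 1) → ℕ) :=
    {a : Fin (n + 1) → ℕ |
      (monomial (Finsupp.equivFunOnFinite.symm a) (1 : ℂ) :
        MvPolynomial (Fin (n + 1)) ℂ) ∈ I} with hMset
  set K : Set (Fin (n + 1) → ℝ) := convexHull ℝ (castF '' Mset) with hKdef
  -- membership characterization of monomials of I
  have hmon_mem : ∀ d : Fin (n + 1) →₀ ℕ,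
      (monomial d (1 : ℂ) ∈ I) ↔ ∃ m ∈ S, m ≤ d := by
    intro d
    have h1 : monomial d (1 : ℂ) ∈ I ↔ monomial d (1 : ℂ) ∈ Ideal.span (mon '' S) := by
      rw [hIS]
    rw [h1, mem_span_monomial_iff]
    constructor
    · intro h
      exact h d (by rw [support_monomial, if_neg one_ne_zero]; exact Finset.mem_singleton_self d)
    · rintro h a ha
      rw [support_monomial, if_neg one_ne_zero, Finset.mem_singleton] at ha
      subst ha; exact h
  have hMmem : ∀ a : Fin (n + 1) → ℕ, a ∈ Mset ↔ ∃ m ∈ S, ∀ i, m i ≤ a i := by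
    intro a
    rw [hMset, Set.mem_setOf_eq, hmon_mem]
    constructor
    · rintro ⟨m, hm, hle⟩
      exact ⟨m, hm, fun i => by simpa using Finsupp.le_def.1 hle i⟩
    · rintro ⟨m, hm, hle⟩
      exact ⟨m, hm, Finsupp.le_def.2 fun i => by simpa using hle i⟩
  have hMup : ∀ a ∈ Mset, ∀ b : Fin (n + 1) → ℕ, (∀ i, a i ≤ b i) → b ∈ Mset := by
    intro a ha b hab
    rw [hMmem] at ha ⊢
    obtain ⟨m, hm, hle⟩ := ha
    exact ⟨m, hm, fun i => (hle i).trans (hab i)⟩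
  have hMne : Mset.Nonempty := by
    have hSne : S.Nonempty := by
      by_contra h
      rw [Set.not_nonempty_iff_eq_empty] at h
      rw [h, Set.image_empty, Ideal.span_empty] at hIS
      exact hI0 hIS
    obtain ⟨m₀, hm₀⟩ := hSne
    exact ⟨fun i => m₀ i, (hMmem _).2 ⟨m₀, hm₀, fun i => le_refl _⟩⟩
  -- K is convex and upward closed
  have hKconv : Convex ℝ K := convex_convexHull ℝ _
  have hKsingle : ∀ x ∈ K, ∀ (i : Fin (n + 1)) (c : ℝ), 0 ≤ c →
      x + c • (Pi.single i (1 : ℝ) : Fin (n + 1) → ℝ) ∈ K := by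
    intro x hx i c hc
    set A : Set (Fin (n + 1) → ℝ) :=
      {y : Fin (n + 1) → ℝ | ∀ c : ℝ, 0 ≤ c → y + c • (Pi.single i (1 : ℝ) : Fin (n + 1) → ℝ) ∈ K} with hA
    have hAconv : Convex ℝ A := by
      intro y₁ h₁ y₂ h₂ lam mu hlam hmu hsum
      intro c hc
      have hkey : (lam • y₁ + mu • y₂) + c • (Pi.single i (1 : ℝ) : Fin (n + 1) → ℝ)
          = lam • (y₁ + c • (Pi.single i (1 : ℝ) : Fin (n + 1) → ℝ)) + mu • (y₂ + c • (Pi.single i (1 : ℝ) : Fin (n + 1) → ℝ)) := by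
        rw [smul_add, smul_add, add_add_add_comm, ← add_smul, hsum, one_smul]
      rw [hkey]
      exact hKconv (h₁ c hc) (h₂ c hc) hlam hmu hsum
    have hgen : (castF '' Mset) ⊆ A := by
      rintro _ ⟨a, ha, rfl⟩ c hc
      rcases eq_or_lt_of_le hc with rfl | hcpos
      · have := subset_convexHull ℝ (castF '' Mset) (⟨a, ha, rfl⟩ : castF a ∈ castF '' Mset)
        simpa using this
      · set N : ℕ := ⌈c⌉₊ with hN
        have hNpos : 0 < N := Nat.ceil_pos.2 hcpos
        have hcN : c ≤ (N : ℝ) := Nat.le_ceil c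
        have hNne : (N : ℝ) ≠ 0 := by positivity
        set b : Fin (n + 1) → ℕ := fun j => a j + (if j = i then N else 0) with hb
        have hbM : b ∈ Mset := hMup a ha b (fun j => Nat.le_add_right _ _)
        have hcast : castF b = castF a + (N : ℝ) • (Pi.single i (1 : ℝ) : Fin (n + 1) → ℝ) := by
          funext j
          by_cases hj : j = i <;>
            simp [hcastF, hb, hj, Pi.single_apply]
        have hkey : castF a + c • (Pi.single i (1 : ℝ) : Fin (n + 1) → ℝ)
            = (1 - c / N) • castF a + (c / N) • castF b := by
          rw [hcast, smul_add, sub_smul, one_smul, smul_smul]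
          rw [div_mul_cancel₀ c hNne]
          abel
        rw [hkey]
        refine hKconv (subset_convexHull ℝ _ ⟨a, ha, rfl⟩)
          (subset_convexHull ℝ _ ⟨b, hbM, rfl⟩) ?_ (by positivity) (by ring)
        rw [sub_nonneg]
        exact div_le_one_of_le₀ hcN (by positivity)
    exact convexHull_min hgen hAconv hx c hc
  have hKup : ∀ x ∈ K, ∀ r : Fin (n + 1) → ℝ, (∀ i, 0 ≤ r i) → x + r ∈ K := by
    have main : ∀ F : Finset (Fin (n + 1)), ∀ r : Fin (n + 1) → ℝ, (∀ i, 0 ≤ r i) →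
        (∀ i ∉ F, r i = 0) → ∀ x ∈ K, x + r ∈ K := by
      intro F
      induction F using Finset.induction_on with
      | empty =>
          intro r h0 hout x hx
          have : r = 0 := funext fun i => hout i (by simp)
          simpa [this] using hx
      | @insert i F hiF ih =>
          intro r h0 hout x hx
          have hxi := hKsingle x hx i (r i) (h0 i)
          have hstep := ih (Function.update r i 0)
            (fun j => by
              by_cases hj : j = i
              · subst hj; simp
              · rw [Function.update_of_ne hj]; exact h0 j)
            (fun j hj => by
              by_cases hj' : j = i
              · subst hj'; simp
              · rw [Function.update_of_ne hj']
                exact hout j (by simp [hj', hj] )) _ hxi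
          have : x + r = (x + r i • (Pi.single i (1 : ℝ) : Fin (n + 1) → ℝ)) + Function.update r i 0 := by
            funext j
            by_cases hj : j = i <;>
              simp [Function.update, hj, Pi.single_apply]
          rw [this]
          exact hstep
    intro x hx r hr
    exact main Finset.univ r hr (fun i hi => absurd (Finset.mem_univ i) hi) x hx
  -- Direction 1 : K ⊆ NObody
  have hDconv : Convex ℝ (underlineDelta (vLexMin n) I) := by
    intro p hp q hq lam mu hlam hmu hsum
    have hcc := convex_closedConvexConeHull (gradedSemigroup (vLexMin n) I)
      hp hq hlam hmu hsum
    show ((lam • p + mu • q).1, (lam • p + mu • q).2, (1 : ℝ))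
      ∈ closedConvexConeHull (gradedSemigroup (vLexMin n) I)
    have heq : ((lam • p + mu • q).1, (lam • p + mu • q).2, (1 : ℝ))
        = lam • (p.1, p.2, (1 : ℝ)) + mu • (q.1, q.2, (1 : ℝ)) := by
      refine Prod.ext rfl (Prod.ext rfl ?_)
      show (1 : ℝ) = lam * 1 + mu * 1
      rw [mul_one, mul_one, hsum]
    rw [heq]
    exact hcc
  set Tmap : (Fin (n + 1) → ℝ) → (Fin n → ℝ) × ℝ :=
    fun y => (fun j => y j.succ, ∑ i, y i) with hTmap
  have hTcomb : ∀ (c d : ℝ) (y z : Fin (n + 1) → ℝ),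
      Tmap (c • y + d • z) = c • Tmap y + d • Tmap z := by
    intro c d y z
    refine Prod.ext (funext fun j => ?_) ?_
    · simp [hTmap]
    · show (∑ i, (c • y + d • z) i) = c * (∑ i, y i) + d * (∑ i, z i)
      simp [Finset.sum_add_distrib, Finset.mul_sum]
  have hTpre : Convex ℝ (Tmap ⁻¹' underlineDelta (vLexMin n) I) := by
    intro y₁ h₁ y₂ h₂ lam mu hlam hmu hsum
    rw [Set.mem_preimage, hTcomb lam mu y₁ y₂]
    exact hDconv h₁ h₂ hlam hmu hsum
  have hgensub : (castF '' Mset) ⊆ Tmap ⁻¹' underlineDelta (vLexMin n) I := by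
    rintro _ ⟨a, ha, rfl⟩
    show Tmap (castF a) ∈ underlineDelta (vLexMin n) I
    have ha' : monomial (Finsupp.equivFunOnFinite.symm a) (1 : ℂ) ∈ I := ha
    have hU := memU_of_monomial I (Finsupp.equivFunOnFinite.symm a) ha'
    have hUm := subset_closedConvexConeHull (gradedSemigroup (vLexMin n) I) hU
    show ((Tmap (castF a)).1, (Tmap (castF a)).2, (1 : ℝ))
      ∈ closedConvexConeHull (gradedSemigroup (vLexMin n) I)
    have heq : ((Tmap (castF a)).1, (Tmap (castF a)).2, (1 : ℝ))
        = ((fun j => (((Finsupp.equivFunOnFinite.symm a) j.succ : ℕ) : ℝ)),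
           (∑ i, (((Finsupp.equivFunOnFinite.symm a) i : ℕ) : ℝ)), (1 : ℝ)) := by
      refine Prod.ext (funext fun j => ?_) (Prod.ext ?_ rfl)
      · simp [hTmap, hcastF]
      · show (∑ i, ((a i : ℕ) : ℝ)) = _
        simp
    rw [heq]
    exact hUm
  have dir1 : K ⊆ NObody (vLexMin n) I := by
    intro y hy
    have hyD : Tmap y ∈ underlineDelta (vLexMin n) I :=
      convexHull_min hgensub hTpre hy
    refine ⟨Tmap y, hyD, ?_⟩
    funext i
    refine Fin.cases ?_ (fun j => ?_) i
    · simp [tauMap, hTmap, Fin.sum_univ_succ]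
    · simp [tauMap, hTmap]
  -- Direction 2 : NObody ⊆ K
  obtain ⟨G, hGfin, hGsub, hGdom⟩ := dickson Mset
  set cG : Set (Fin (n + 1) → ℝ) := convexHull ℝ (castF '' G) with hcG
  have hcGcompact : IsCompact cG := (hGfin.image castF).isCompact_convexHull ℝ
  have hcGconv : Convex ℝ cG := convex_convexHull ℝ _
  have hcGsubK : cG ⊆ K := convexHull_mono (Set.image_mono hGsub)
  have hcGne : cG.Nonempty := by
    obtain ⟨a₀, ha₀⟩ := hMne
    obtain ⟨g₀, hg₀, -⟩ := hGdom a₀ ha₀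
    exact ⟨castF g₀, subset_convexHull ℝ _ ⟨g₀, hg₀, rfl⟩⟩
  set C : Set ((Fin n → ℝ) × ℝ × ℝ) :=
    {q | 0 ≤ q.2.2 ∧ ∃ g ∈ cG, ∃ r : Fin (n + 1) → ℝ, (∀ i, 0 ≤ r i) ∧
      tauMap n (q.1, q.2.1) = q.2.2 • g + r} with hC
  have hφcont : Continuous (fun q : (Fin n → ℝ) × ℝ × ℝ => tauMap n (q.1, q.2.1)) := by
    refine continuous_pi fun i => ?_
    refine Fin.cases ?_ (fun j => ?_) i
    · simp only [tauMap, Fin.cons_zero]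
      exact (continuous_snd.fst).sub
        (continuous_finset_sum _ fun j _ => (continuous_apply j).comp continuous_fst)
    · simp only [tauMap, Fin.cons_succ]
      exact (continuous_apply j).comp continuous_fst
  have hCclosed : IsClosed C := by
    refine isClosed_of_closure_subset ?_
    intro q hq
    rw [mem_closure_iff_seq_limit] at hq
    obtain ⟨x, hxC, hxlim⟩ := hq
    have h1 : ∀ k, 0 ≤ (x k).2.2 := fun k => (hxC k).1
    choose gs hgs rs hrs hreq using fun k => (hxC k).2
    have htlim : Filter.Tendsto (fun k => (x k).2.2) Filter.atTop (nhds q.2.2) :=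
      ((continuous_snd.comp continuous_snd).tendsto q).comp hxlim
    have hylim : Filter.Tendsto (fun k => tauMap n ((x k).1, (x k).2.1)) Filter.atTop
        (nhds (tauMap n (q.1, q.2.1))) := (hφcont.tendsto q).comp hxlim
    obtain ⟨g, hgmem, φs, hφmono, hglim⟩ := hcGcompact.tendsto_subseq hgs
    have htlim' := htlim.comp hφmono.tendsto_atTop
    have hylim' := hylim.comp hφmono.tendsto_atTop
    have hrlim : Filter.Tendsto (fun k => rs (φs k)) Filter.atTop
        (nhds (tauMap n (q.1, q.2.1) - q.2.2 • g)) := by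
      have hfun : (fun k => rs (φs k))
          = fun k => tauMap n ((x (φs k)).1, (x (φs k)).2.1) - (x (φs k)).2.2 • gs (φs k) := by
        funext k
        rw [hreq (φs k)]
        abel
      rw [hfun]
      exact hylim'.sub (htlim'.smul hglim)
    refine ⟨ge_of_tendsto' htlim h1, g, hgmem,
      tauMap n (q.1, q.2.1) - q.2.2 • g, ?_, by abel⟩
    intro i
    have hcoord : Filter.Tendsto (fun k => rs (φs k) i) Filter.atTop
        (nhds ((tauMap n (q.1, q.2.1) - q.2.2 • g) i)) :=
      ((continuous_apply i).tendsto _).comp hrlim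
    exact ge_of_tendsto' hcoord (fun k => hrs (φs k) i)
  have hCconv : Convex ℝ C := by
    rintro q₁ ⟨ht₁, g₁, hg₁, r₁, hr₁, he₁⟩ q₂ ⟨ht₂, g₂, hg₂, r₂, hr₂, he₂⟩ lam mu hlam hmu hsum
    have h22 : (lam • q₁ + mu • q₂).2.2 = lam * q₁.2.2 + mu * q₂.2.2 := rfl
    have hty : tauMap n ((lam • q₁ + mu • q₂).1, (lam • q₁ + mu • q₂).2.1)
        = lam • tauMap n (q₁.1, q₁.2.1) + mu • tauMap n (q₂.1, q₂.2.1) := by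
      have h := tauMap_comb lam mu (q₁.1, q₁.2.1) (q₂.1, q₂.2.1)
      convert h using 2
      rfl
    refine ⟨by rw [h22]; positivity, ?_⟩
    by_cases hσ : lam * q₁.2.2 + mu * q₂.2.2 = 0
    · have hA : lam * q₁.2.2 = 0 := by nlinarith [mul_nonneg hlam ht₁, mul_nonneg hmu ht₂]
      have hB : mu * q₂.2.2 = 0 := by nlinarith [mul_nonneg hlam ht₁, mul_nonneg hmu ht₂]
      refine ⟨g₁, hg₁, lam • r₁ + mu • r₂,
        fun i => add_nonneg (mul_nonneg hlam (hr₁ i)) (mul_nonneg hmu (hr₂ i)), ?_⟩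
      rw [hty, he₁, he₂, h22, hσ, smul_add, smul_add, smul_smul, smul_smul, hA, hB]
      simp only [zero_smul, zero_add]
    · set σ : ℝ := lam * q₁.2.2 + mu * q₂.2.2 with hσdef
      have hσpos : 0 < σ := lt_of_le_of_ne (by rw [hσdef]; positivity) (Ne.symm hσ)
      refine ⟨σ⁻¹ • ((lam * q₁.2.2) • g₁ + (mu * q₂.2.2) • g₂), ?_,
        lam • r₁ + mu • r₂,
        fun i => add_nonneg (mul_nonneg hlam (hr₁ i)) (mul_nonneg hmu (hr₂ i)), ?_⟩
      · have hcomb := hcGconv hg₁ hg₂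
          (mul_nonneg (inv_nonneg.2 hσpos.le) (mul_nonneg hlam ht₁))
          (mul_nonneg (inv_nonneg.2 hσpos.le) (mul_nonneg hmu ht₂))
          (by field_simp; exact hσdef.symm)
        have : σ⁻¹ • ((lam * q₁.2.2) • g₁ + (mu * q₂.2.2) • g₂)
            = (σ⁻¹ * (lam * q₁.2.2)) • g₁ + (σ⁻¹ * (mu * q₂.2.2)) • g₂ := by
          rw [smul_add, smul_smul, smul_smul]
        rw [this]
        exact hcomb
      · rw [hty, he₁, he₂, h22, smul_inv_smul₀ hσpos.ne',
          smul_add, smul_add, smul_smul, smul_smul]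
        abel
  have hCcone : ∀ c : ℝ, 0 ≤ c → ∀ q ∈ C, c • q ∈ C := by
    rintro c hc q ⟨ht, g, hg, r, hr, he⟩
    have h22 : (c • q).2.2 = c * q.2.2 := rfl
    refine ⟨by rw [h22]; positivity, g, hg, c • r,
      fun i => mul_nonneg hc (hr i), ?_⟩
    have hty : tauMap n ((c • q).1, (c • q).2.1) = c • tauMap n (q.1, q.2.1) := by
      have h := tauMap_smul c (q.1, q.2.1)
      convert h using 2
      rfl
    rw [hty, he, h22, smul_add, smul_smul]
  have hCU : gradedSemigroup (vLexMin n) I ⊆ C := by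
    intro q hq
    have hq' : q ∈ gradedSemigroup (vLexMin n) (Ideal.span (mon '' S)) := by
      rw [hIS] at hq; exact hq
    obtain ⟨t, a, b, hbS, hba, rfl⟩ := memU_elim hq'
    rw [hC, Set.mem_setOf_eq]
    have htau : tauMap n
        ((((fun j : Fin n => ((a j.succ : ℕ) : ℝ)), (∑ i : Fin (n + 1), ((a i : ℕ) : ℝ)),
          ((t : ℕ) : ℝ)) : (Fin n → ℝ) × ℝ × ℝ).1,
         (((fun j : Fin n => ((a j.succ : ℕ) : ℝ)), (∑ i : Fin (n + 1), ((a i : ℕ) : ℝ)),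
          ((t : ℕ) : ℝ)) : (Fin n → ℝ) × ℝ × ℝ).2.1)
        = fun i : Fin (n + 1) => ((a i : ℕ) : ℝ) := tauMap_cast a
    refine ⟨by positivity, ?_⟩
    rcases Nat.eq_zero_or_pos t with rfl | htpos
    · obtain ⟨g₀, hg₀⟩ := hcGne
      refine ⟨g₀, hg₀, (fun i => ((a i : ℕ) : ℝ) : Fin (n + 1) → ℝ), fun i => by positivity, ?_⟩
      rw [htau]
      norm_num
    · have hbM : ∀ i : Fin t, (fun j => ((b i) j : ℕ)) ∈ Mset := by
        intro i
        rw [hMmem]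
        exact ⟨b i, hbS i, fun j => le_refl _⟩
      choose gg hggG hggle using fun i => hGdom _ (hbM i)
      have htne : ((t : ℕ) : ℝ) ≠ 0 := by positivity
      set gbar : Fin (n + 1) → ℝ := ((t : ℕ) : ℝ)⁻¹ • ∑ i, castF (gg i) with hgbar
      have hgmem : gbar ∈ cG := by
        have hrepr : gbar = ∑ i : Fin t, (((t : ℕ) : ℝ)⁻¹) • castF (gg i) := by
          rw [hgbar, Finset.smul_sum]
        rw [hrepr]
        refine hcGconv.sum_mem (fun i _ => by positivity) ?_
          (fun i _ => subset_convexHull ℝ _ ⟨gg i, hggG i, rfl⟩)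
        rw [Finset.sum_const, Finset.card_univ, Fintype.card_fin, nsmul_eq_mul,
          mul_inv_cancel₀ htne]
      refine ⟨gbar, hgmem, (fun i => ((a i : ℕ) : ℝ)) - ∑ i, castF (gg i), ?_, ?_⟩
      · intro j
        have h1 : (∑ i, castF (gg i)) j = ∑ i : Fin t, ((gg i j : ℕ) : ℝ) :=
          Finset.sum_apply _ _ _
        have h2 : ∑ i : Fin t, ((gg i j : ℕ) : ℝ) ≤ ∑ i : Fin t, (((b i) j : ℕ) : ℝ) :=
          Finset.sum_le_sum fun i _ => Nat.cast_le.2 (hggle i j)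
        have h3 : ∑ i : Fin t, (((b i) j : ℕ) : ℝ) = (((∑ i, b i) j : ℕ) : ℝ) := by
          rw [Finsupp.finset_sum_apply, Nat.cast_sum]
        have h4 : (((∑ i, b i) j : ℕ) : ℝ) ≤ ((a j : ℕ) : ℝ) :=
          Nat.cast_le.2 (Finsupp.le_def.1 hba j)
        have h5 : (∑ i, castF (gg i)) j ≤ ((a j : ℕ) : ℝ) := by
          rw [h1]
          exact h2.trans (h3 ▸ h4)
        have h6 : ((fun i => ((a i : ℕ) : ℝ)) - ∑ i, castF (gg i)) j
            = ((a j : ℕ) : ℝ) - (∑ i, castF (gg i)) j := rfl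
        rw [h6]
        linarith
      · rw [htau]
        rw [hgbar, smul_inv_smul₀ htne]
        abel
  have dir2 : NObody (vLexMin n) I ⊆ K := by
    rintro _ ⟨p, hp, rfl⟩
    have hmem : (p.1, p.2, (1 : ℝ)) ∈ C :=
      closedConvexConeHull_subset hCU hCclosed hCconv hCcone hp
    rw [hC, Set.mem_setOf_eq] at hmem
    obtain ⟨-, g, hg, r, hr, he⟩ := hmem
    have hpe : tauMap n p = g + r := by
      have : tauMap n ((p.1, p.2, (1:ℝ)).1, (p.1, p.2, (1:ℝ)).2.1) = tauMap n p := rfl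
      rw [this] at he
      rw [he, one_smul]
    rw [hpe]
    exact hKup g (hcGsubK hg) r hr
  exact Set.Subset.antisymm dir2 dir1
end
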